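/- Let G₂ be the group whose underlying set is ℝ⁵ with multiplication (x₁,x₂,x₃,x₄,x₅)·(y₁,y₂,y₃,y₄,y₅) = (y₁+x₁e^{y₂}, x₂+y₂, y₃+x₃e^{y₄}, x₄+y₄, x₅+y₅). Let H = { (t, 0, k, 0, t+k) : t, k ∈ ℝ }, A = { (2−e^{x₂}−e^{x₄}, x₂, 0, x₄, x₅+2−e^{x₂}−e^{x₄}) : x₂, x₄, x₅ ∈ ℝ } and B = { (1−e^{y₂}, y₂, 1−e^{y₂}, y₄, y₅) : y₂, y₄, y₅ ∈ ℝ }. Then H is a subgroup of G₂, A and B are left transversals to H in G₂, a⁻¹b⁻¹ab ∈ H for all a ∈ A and b ∈ B, and the subgroup of G₂ generated by A ∪ B is all of G₂. -/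

import Mathlib

/-- The underlying set `ℝ⁵` of the group `G₂ = 𝓛₂ × 𝓛₂ × ℝ`. -/
@[ext] structure G2 where
  x1 : ℝ
  x2 : ℝ
  x3 : ℝ
  x4 : ℝ
  x5 : ℝ

namespace G2

/-- `(x₁,…,x₅)·(y₁,…,y₅) = (y₁+x₁e^{y₂}, x₂+y₂, y₃+x₃e^{y₄}, x₄+y₄, x₅+y₅)`. -/
noncomputable def gmul (a b : G2) : G2 :=
  ⟨b.x1 + a.x1 * Real.exp b.x2, a.x2 + b.x2, b.x3 + a.x3 * Real.exp b.x4,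
    a.x4 + b.x4, a.x5 + b.x5⟩

/-- The identity element. -/
def gone : G2 := ⟨0, 0, 0, 0, 0⟩

/-- Inversion. -/
noncomputable def ginv (a : G2) : G2 :=
  ⟨-a.x1 * Real.exp (-a.x2), -a.x2, -a.x3 * Real.exp (-a.x4), -a.x4, -a.x5⟩

noncomputable instance : Group G2 where
  mul := gmul
  one := gone
  inv := ginv
  mul_assoc a b c := by
    show gmul (gmul a b) c = gmul a (gmul b c)
    simp only [gmul, Real.exp_add, mk.injEq]
    refine ⟨by ring, by ring, by ring, by ring, by ring⟩
  one_mul a := by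
    show gmul gone a = a
    simp [gmul, gone]
  mul_one a := by
    show gmul a gone = a
    simp [gmul, gone]
  inv_mul_cancel a := by
    show gmul (ginv a) a = gone
    simp only [gmul, ginv, gone, mk.injEq]
    refine ⟨?_, by ring, ?_, by ring, by ring⟩
    · rw [neg_mul, neg_mul, mul_assoc, ← Real.exp_add, neg_add_cancel, Real.exp_zero, mul_one]
      ring
    · rw [neg_mul, neg_mul, mul_assoc, ← Real.exp_add, neg_add_cancel, Real.exp_zero, mul_one]
      ring

end G2

/-- `A` is a left transversal to `S` in the ambient group: every element has a
unique factorization `k = a * s` with `a ∈ A`, `s ∈ S`. -/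
def IsLeftTransversal {G : Type*} [Group G] (A S : Set G) : Prop :=
  ∀ k : G, ∃! p : G × G, p.1 ∈ A ∧ p.2 ∈ S ∧ k = p.1 * p.2


namespace G2
lemma mul_def (a b : G2) : a * b = gmul a b := rfl
lemma inv_def (a : G2) : a⁻¹ = ginv a := rfl
lemma one_def : (1 : G2) = gone := rfl

/-- The subgroup `H`. -/
noncomputable def Hsub : Subgroup G2 where
  carrier := {g : G2 | ∃ t k : ℝ, g = ⟨t, 0, k, 0, t + k⟩}
  one_mem' := ⟨0, 0, by simp [one_def, gone]⟩
  mul_mem' := by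
    rintro a b ⟨t, k, rfl⟩ ⟨t', k', rfl⟩
    refine ⟨t + t', k + k', ?_⟩
    simp only [mul_def, gmul, Real.exp_zero, mk.injEq]
    refine ⟨by ring, by ring, by ring, by ring, by ring⟩
  inv_mem' := by
    rintro a ⟨t, k, rfl⟩
    refine ⟨-t, -k, ?_⟩
    simp only [inv_def, ginv, neg_zero, Real.exp_zero, mk.injEq]
    refine ⟨by ring, trivial, by ring, trivial, by ring⟩

end G2

open G2 in
theorem G2.aux_closure (A B : Set G2)
    (hA : ∀ x2 x4 x5 : ℝ, (⟨2 - Real.exp x2 - Real.exp x4, x2, 0, x4,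
        x5 + 2 - Real.exp x2 - Real.exp x4⟩ : G2) ∈ A)
    (hB : ∀ y2 y4 y5 : ℝ, (⟨1 - Real.exp y2, y2, 1 - Real.exp y2, y4, y5⟩ : G2) ∈ B) :
    Subgroup.closure (A ∪ B) = ⊤ := by
  rw [Subgroup.eq_top_iff']
  intro g
  set C := Subgroup.closure (A ∪ B) with hC
  have memA : ∀ x2 x4 x5 : ℝ, (⟨2 - Real.exp x2 - Real.exp x4, x2, 0, x4,
      x5 + 2 - Real.exp x2 - Real.exp x4⟩ : G2) ∈ C :=
    fun a b c => Subgroup.subset_closure (Or.inl (hA a b c))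
  have memB : ∀ y2 y4 y5 : ℝ, (⟨1 - Real.exp y2, y2, 1 - Real.exp y2, y4, y5⟩ : G2) ∈ C :=
    fun a b c => Subgroup.subset_closure (Or.inr (hB a b c))
  -- elements (0,0,0,0,s)
  have e5 : ∀ s : ℝ, (⟨0, 0, 0, 0, s⟩ : G2) ∈ C := by
    intro s
    have h := memA 0 0 s
    have heq : (⟨2 - Real.exp 0 - Real.exp 0, 0, 0, 0,
        s + 2 - Real.exp 0 - Real.exp 0⟩ : G2) = ⟨0, 0, 0, 0, s⟩ := by
      simp only [Real.exp_zero, mk.injEq, true_and, and_true]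
      and_intros <;> ring
    rwa [heq] at h
  -- elements (0,0,0,u,s)
  have bmem : ∀ u s : ℝ, (⟨0, 0, 0, u, s⟩ : G2) ∈ C := by
    intro u s
    have h := memB 0 u s
    have heq : (⟨1 - Real.exp 0, 0, 1 - Real.exp 0, u, s⟩ : G2) = ⟨0, 0, 0, u, s⟩ := by
      simp only [Real.exp_zero, mk.injEq, true_and, and_true]
      and_intros <;> ring
    rwa [heq] at h
  -- elements (t,0,0,0,0), first for t < 1
  have h1s : ∀ t : ℝ, t < 1 → (⟨t, 0, 0, 0, 0⟩ : G2) ∈ C := by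
    intro t ht
    set β := Real.log (1 - t) with hβ
    have hb : Real.exp β = 1 - t := Real.exp_log (by linarith)
    have m := C.mul_mem (memA 0 β 0) (bmem (-β) (-t))
    have heq : (⟨2 - Real.exp 0 - Real.exp β, 0, 0, β,
        0 + 2 - Real.exp 0 - Real.exp β⟩ : G2) * ⟨0, 0, 0, -β, -t⟩ = ⟨t, 0, 0, 0, 0⟩ := by
      simp only [mul_def, gmul, Real.exp_zero, hb, mk.injEq]
      and_intros <;> ring
    rwa [heq] at m
  have h1 : ∀ t : ℝ, (⟨t, 0, 0, 0, 0⟩ : G2) ∈ C := by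
    intro t
    rcases lt_or_ge t 1 with h | h
    · exact h1s t h
    · have m := C.inv_mem (h1s (-t) (by linarith))
      have heq : ((⟨-t, 0, 0, 0, 0⟩ : G2))⁻¹ = ⟨t, 0, 0, 0, 0⟩ := by
        simp only [inv_def, ginv, neg_zero, Real.exp_zero, mk.injEq, true_and, and_true]
        and_intros <;> ring
      rwa [heq] at m
  -- elements (0,γ,1-e^γ,0,0)
  have pγ : ∀ γ : ℝ, (⟨0, γ, 1 - Real.exp γ, 0, 0⟩ : G2) ∈ C := by
    intro γ
    have m := C.mul_mem (memB γ 0 0) (h1 (Real.exp γ - 1))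
    have heq : (⟨1 - Real.exp γ, γ, 1 - Real.exp γ, 0, 0⟩ : G2) *
        ⟨Real.exp γ - 1, 0, 0, 0, 0⟩ = ⟨0, γ, 1 - Real.exp γ, 0, 0⟩ := by
      simp only [mul_def, gmul, Real.exp_zero, mk.injEq]
      and_intros <;> ring
    rwa [heq] at m
  -- elements (0,0,1-e^γ,0,0)
  have h3v : ∀ γ : ℝ, (⟨0, 0, 1 - Real.exp γ, 0, 0⟩ : G2) ∈ C := by
    intro γ
    have m := C.mul_mem (C.mul_mem (C.mul_mem (pγ γ) (memA (-γ) 0 0))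
      (h1 (-(1 - Real.exp (-γ))))) (e5 (-(1 - Real.exp (-γ))))
    have heq : (⟨0, γ, 1 - Real.exp γ, 0, 0⟩ : G2) *
        ⟨2 - Real.exp (-γ) - Real.exp 0, -γ, 0, 0, 0 + 2 - Real.exp (-γ) - Real.exp 0⟩ *
        ⟨-(1 - Real.exp (-γ)), 0, 0, 0, 0⟩ * ⟨0, 0, 0, 0, -(1 - Real.exp (-γ))⟩ =
        ⟨0, 0, 1 - Real.exp γ, 0, 0⟩ := by
      simp only [mul_def, gmul, Real.exp_zero, mk.injEq]
      and_intros <;> ring_nf <;> simp [Real.exp_neg]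
    rwa [heq] at m
  -- elements (0,0,k,0,0)
  have h3 : ∀ k : ℝ, (⟨0, 0, k, 0, 0⟩ : G2) ∈ C := by
    have h3s : ∀ k : ℝ, k < 1 → (⟨0, 0, k, 0, 0⟩ : G2) ∈ C := by
      intro k hk
      have h := h3v (Real.log (1 - k))
      rw [Real.exp_log (by linarith), show (1 : ℝ) - (1 - k) = k from by ring] at h
      exact h
    intro k
    rcases lt_or_ge k 1 with h | h
    · exact h3s k h
    · have m := C.inv_mem (h3s (-k) (by linarith))
      have heq : ((⟨0, 0, -k, 0, 0⟩ : G2))⁻¹ = ⟨0, 0, k, 0, 0⟩ := by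
        simp only [inv_def, ginv, neg_zero, Real.exp_zero, mk.injEq, true_and, and_true]
        and_intros <;> ring
      rwa [heq] at m
  -- elements (0,γ,0,0,0)
  have qmem : ∀ γ : ℝ, (⟨0, γ, 0, 0, 0⟩ : G2) ∈ C := by
    intro γ
    have m := C.mul_mem (pγ γ) (h3 (Real.exp γ - 1))
    have heq : (⟨0, γ, 1 - Real.exp γ, 0, 0⟩ : G2) * ⟨0, 0, Real.exp γ - 1, 0, 0⟩ =
        ⟨0, γ, 0, 0, 0⟩ := by
      simp only [mul_def, gmul, Real.exp_zero, mk.injEq]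
      and_intros <;> ring
    rwa [heq] at m
  -- assemble an arbitrary element
  have m := C.mul_mem (C.mul_mem (C.mul_mem (h1 (g.x1 * Real.exp (-g.x2))) (qmem g.x2))
    (h3 (g.x3 * Real.exp (-g.x4)))) (bmem g.x4 g.x5)
  have heq : (⟨g.x1 * Real.exp (-g.x2), 0, 0, 0, 0⟩ : G2) * ⟨0, g.x2, 0, 0, 0⟩ *
      ⟨0, 0, g.x3 * Real.exp (-g.x4), 0, 0⟩ * ⟨0, 0, 0, g.x4, g.x5⟩ = g := by
    ext <;> simp only [mul_def, gmul, Real.exp_zero, Real.exp_neg, zero_add, add_zero, mul_zero, zero_mul] <;>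
      field_simp
  rwa [heq] at m

open G2

/-- `H = {(t,0,k,0,t+k)}` is a subgroup of `G₂`; the indicated sets `A` and `B` are
`H`-connected left transversals to `H` in `G₂` and together they generate `G₂`. -/
theorem G2_connected_transversals :
    ∃ H : Subgroup G2,
      (H : Set G2) = {g : G2 | ∃ t k : ℝ, g = ⟨t, 0, k, 0, t + k⟩} ∧
      IsLeftTransversal {g : G2 | ∃ x2 x4 x5 : ℝ,
          g = ⟨2 - Real.exp x2 - Real.exp x4, x2, 0, x4,
                x5 + 2 - Real.exp x2 - Real.exp x4⟩} (H : Set G2) ∧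
      IsLeftTransversal {g : G2 | ∃ y2 y4 y5 : ℝ,
          g = ⟨1 - Real.exp y2, y2, 1 - Real.exp y2, y4, y5⟩} (H : Set G2) ∧
      (∀ a ∈ {g : G2 | ∃ x2 x4 x5 : ℝ,
          g = ⟨2 - Real.exp x2 - Real.exp x4, x2, 0, x4,
                x5 + 2 - Real.exp x2 - Real.exp x4⟩},
        ∀ b ∈ {g : G2 | ∃ y2 y4 y5 : ℝ,
          g = ⟨1 - Real.exp y2, y2, 1 - Real.exp y2, y4, y5⟩},
          a⁻¹ * b⁻¹ * a * b ∈ H) ∧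
      Subgroup.closure
        ({g : G2 | ∃ x2 x4 x5 : ℝ,
          g = ⟨2 - Real.exp x2 - Real.exp x4, x2, 0, x4,
                x5 + 2 - Real.exp x2 - Real.exp x4⟩} ∪
         {g : G2 | ∃ y2 y4 y5 : ℝ,
          g = ⟨1 - Real.exp y2, y2, 1 - Real.exp y2, y4, y5⟩}) = ⊤ := by
  refine ⟨G2.Hsub, rfl, ?_, ?_, ?_, ?_⟩
  · -- A is a left transversal
    intro g
    refine ⟨(⟨2 - Real.exp g.x2 - Real.exp g.x4, g.x2, 0, g.x4,
        (g.x5 - g.x1 - g.x3) + 2 - Real.exp g.x2 - Real.exp g.x4⟩,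
        ⟨g.x1 - 2 + Real.exp g.x2 + Real.exp g.x4, 0, g.x3, 0,
        (g.x1 - 2 + Real.exp g.x2 + Real.exp g.x4) + g.x3⟩),
      ⟨⟨g.x2, g.x4, g.x5 - g.x1 - g.x3, rfl⟩,
       ⟨g.x1 - 2 + Real.exp g.x2 + Real.exp g.x4, g.x3, rfl⟩, ?_⟩, ?_⟩
    · simp only [mul_def, gmul, Real.exp_zero, mk.injEq]
      and_intros <;> ring
    · rintro ⟨a, s⟩ ⟨⟨α, β, x5, rfl⟩, ⟨t, k, rfl⟩, rfl⟩
      simp only [mul_def, gmul, Real.exp_zero, mul_one, add_zero, zero_mul, zero_add,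
        Prod.mk.injEq, mk.injEq, true_and, and_true]
      and_intros <;> ring
  · -- B is a left transversal
    intro g
    refine ⟨(⟨1 - Real.exp g.x2, g.x2, 1 - Real.exp g.x2, g.x4,
        g.x5 - g.x1 - g.x3 + 2 - 2 * Real.exp g.x2⟩,
        ⟨g.x1 - 1 + Real.exp g.x2, 0, g.x3 - 1 + Real.exp g.x2, 0,
        (g.x1 - 1 + Real.exp g.x2) + (g.x3 - 1 + Real.exp g.x2)⟩),
      ⟨⟨g.x2, g.x4, g.x5 - g.x1 - g.x3 + 2 - 2 * Real.exp g.x2, rfl⟩,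
       ⟨g.x1 - 1 + Real.exp g.x2, g.x3 - 1 + Real.exp g.x2, rfl⟩, ?_⟩, ?_⟩
    · simp only [mul_def, gmul, Real.exp_zero, mk.injEq]
      and_intros <;> ring
    · rintro ⟨a, s⟩ ⟨⟨γ, δ, y5, rfl⟩, ⟨t, k, rfl⟩, rfl⟩
      simp only [mul_def, gmul, Real.exp_zero, mul_one, add_zero, zero_mul, zero_add,
        Prod.mk.injEq, mk.injEq, true_and, and_true]
      and_intros <;> ring
  · -- commutators lie in H
    rintro a ⟨α, β, x5, rfl⟩ b ⟨γ, δ, y5, rfl⟩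
    refine ⟨(Real.exp γ - 1) * (1 - Real.exp β), (1 - Real.exp γ) * (1 - Real.exp β), ?_⟩
    simp only [mul_def, inv_def, gmul, ginv, Real.exp_neg, mk.injEq]
    have hα := Real.exp_ne_zero α
    have hβ := Real.exp_ne_zero β
    have hγ := Real.exp_ne_zero γ
    have hδ := Real.exp_ne_zero δ
    refine ⟨?_, by ring, ?_, by ring, by ring⟩
    · field_simp
      ring
    · field_simp
      ring
  · -- generation
    exact G2.aux_closure _ _ (fun a b c => ⟨a, b, c, rfl⟩) (fun a b c => ⟨a, b, c, rfl⟩)
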